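/- arXiv:1212.5394 — 6 statements merged into one kernel-verified Lean document; each statement's English description precedes it below -/
import Mathlib

section
/- For a discrete energy-harvesting profile with arrival epochs 0 = t₁ < t₂ < ... < t_N < T and energies E₁,...,E_N > 0, the directional water-filling power levels are non-decreasing: if the DWF indices i₀ = 0 < i₁ < ... < i_{N^D} are defined iteratively by i_k = argmin over i with i_{k-1} < i ≤ N of (∑_{j=i_{k-1}+1}^{i} E_j)/(t_{i+1} − t_{i_{k-1}+1}) (with t_{N+1} := T), then the resulting power levels P_k = (∑_{j=i_{k-1}+1}^{i_k} E_j)/(t_{i_k+1} − t_{i_{k-1}+1}) satisfy P_1 ≤ P_2 ≤ ... ≤ P_{N^D}. -/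
open Finset

/-- Directional water-filling power levels are non-decreasing. The DWF indices
`idx 0 = 0 < idx 1 < ... < idx ND = N` are characterized by the iterative argmin
property (each `idx k` is the smallest index minimizing the prefix average power
over the remaining epochs); the resulting constant power levels are monotone. -/
theorem stmt2 (N ND : ℕ) (T : ℝ) (t : ℕ → ℝ) (E : ℕ → ℝ)
    (hN : 1 ≤ N) (hND : 1 ≤ ND)
    (ht1 : t 1 = 0) (htT : t (N + 1) = T)
    (htmono : StrictMonoOn t (Set.Icc 1 (N + 1)))
    (hE : ∀ i ∈ Finset.Icc 1 N, 0 < E i)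
    (idx : ℕ → ℕ) (hidx0 : idx 0 = 0) (hidxND : idx ND = N)
    (hidx_mono : ∀ k ∈ Finset.Icc 1 ND, idx (k - 1) < idx k ∧ idx k ≤ N)
    (hmin : ∀ k ∈ Finset.Icc 1 ND, ∀ i, idx (k - 1) < i → i ≤ N →
      (∑ j ∈ Finset.Ioc (idx (k - 1)) (idx k), E j) / (t (idx k + 1) - t (idx (k - 1) + 1))
        ≤ (∑ j ∈ Finset.Ioc (idx (k - 1)) i, E j) / (t (i + 1) - t (idx (k - 1) + 1)))
    (hleast : ∀ k ∈ Finset.Icc 1 ND, ∀ i, idx (k - 1) < i → i < idx k →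
      (∑ j ∈ Finset.Ioc (idx (k - 1)) (idx k), E j) / (t (idx k + 1) - t (idx (k - 1) + 1))
        < (∑ j ∈ Finset.Ioc (idx (k - 1)) i, E j) / (t (i + 1) - t (idx (k - 1) + 1))) :
    ∀ k ∈ Finset.Icc 1 (ND - 1),
      (∑ j ∈ Finset.Ioc (idx (k - 1)) (idx k), E j) / (t (idx k + 1) - t (idx (k - 1) + 1))
        ≤ (∑ j ∈ Finset.Ioc (idx k) (idx (k + 1)), E j) / (t (idx (k + 1) + 1) - t (idx k + 1)) := by
  intro k hk
  simp only [Finset.mem_Icc] at hk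
  obtain ⟨hk1, hk2⟩ := hk
  have hkND : k ≤ ND := le_trans hk2 (Nat.sub_le _ _)
  have hk1ND : k + 1 ≤ ND := by omega
  have hkmem : k ∈ Finset.Icc 1 ND := Finset.mem_Icc.mpr ⟨hk1, hkND⟩
  have hk1mem : k + 1 ∈ Finset.Icc 1 ND := Finset.mem_Icc.mpr ⟨by omega, hk1ND⟩
  obtain ⟨hab, hbN⟩ := hidx_mono k hkmem
  obtain ⟨hbc', hcN⟩ := hidx_mono (k + 1) hk1mem
  have hbc : idx k < idx (k + 1) := by simpa using hbc'
  set a := idx (k - 1)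
  set b := idx k
  set c := idx (k + 1)
  -- positivity of denominators
  have haN : a < N := lt_of_lt_of_le hab hbN
  have hmem : ∀ m : ℕ, 1 ≤ m → m ≤ N + 1 → m ∈ Set.Icc 1 (N + 1) := fun m h1 h2 => ⟨h1, h2⟩
  have hd1 : 0 < t (b + 1) - t (a + 1) := by
    have := htmono (hmem (a+1) (by omega) (by omega)) (hmem (b+1) (by omega) (by omega)) (by omega)
    linarith
  have hd2 : 0 < t (c + 1) - t (b + 1) := by
    have := htmono (hmem (b+1) (by omega) (by omega)) (hmem (c+1) (by omega) (by omega)) (by omega)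
    linarith
  have hd3 : 0 < t (c + 1) - t (a + 1) := by linarith
  -- apply minimality at step k with i = c
  have key := hmin k hkmem c (lt_trans hab hbc) hcN
  have hsplit : (∑ j ∈ Finset.Ioc a c, E j) = (∑ j ∈ Finset.Ioc a b, E j) + (∑ j ∈ Finset.Ioc b c, E j) :=
    (Finset.sum_Ioc_consecutive _ (le_of_lt hab) (le_of_lt hbc)).symm
  rw [hsplit] at key
  set S1 := ∑ j ∈ Finset.Ioc a b, E j
  set S2 := ∑ j ∈ Finset.Ioc b c, E j
  set d1 := t (b + 1) - t (a + 1)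
  set d2 := t (c + 1) - t (b + 1)
  have hd3' : t (c + 1) - t (a + 1) = d1 + d2 := by ring
  rw [hd3'] at key
  rw [div_le_div_iff₀ hd1 (by linarith)] at key
  rw [div_le_div_iff₀ hd1 hd2]
  nlinarith [key]
end

section
/- The DWF power allocation is feasible with respect to the energy-neutrality constraint: with the DWF intervals and constant power levels P_k defined by the iterative argmin construction, the cumulative consumed energy up to any time t never exceeds the cumulative harvested energy E_Σ^EH(t). -/
open Finset

lemma tele_aux (E : ℕ → ℝ) (idx : ℕ → ℕ) :
    ∀ n : ℕ, (∀ m, m < n → idx m ≤ idx (m + 1)) →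
      ∑ m ∈ Finset.Icc 1 n, ∑ j ∈ Finset.Ioc (idx (m - 1)) (idx m), E j
        = ∑ j ∈ Finset.Ioc (idx 0) (idx n), E j := by
  intro n
  induction n with
  | zero => simp
  | succ n ih =>
    intro h
    have h0n : idx 0 ≤ idx n := by
      clear ih
      induction n with
      | zero => exact le_refl _
      | succ n ih2 =>
        exact le_trans (ih2 (fun m hm => h m (by omega))) (h n (by omega))
    rw [Finset.sum_Icc_succ_top (by omega : 1 ≤ n + 1), ih (fun m hm => h m (by omega))]
    simp only [Nat.add_sub_cancel]
    exact Finset.sum_Ioc_consecutive E h0n (h n (by omega))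

/-- Energy-neutrality (feasibility) of the DWF allocation: the cumulative energy consumed
by the constant-power DWF policy up to any time `τ` in the `k`-th DWF interval never
exceeds the cumulative harvested energy `E_Σ^EH(τ) = ∑_{i : t_i ≤ τ} E_i`. -/
theorem stmt3 (N ND : ℕ) (T : ℝ) (t : ℕ → ℝ) (E : ℕ → ℝ)
    (hN : 1 ≤ N) (hND : 1 ≤ ND)
    (ht1 : t 1 = 0) (htT : t (N + 1) = T)
    (htmono : StrictMonoOn t (Set.Icc 1 (N + 1)))
    (hE : ∀ i ∈ Finset.Icc 1 N, 0 < E i)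
    (idx : ℕ → ℕ) (hidx0 : idx 0 = 0) (hidxND : idx ND = N)
    (hidx_mono : ∀ k ∈ Finset.Icc 1 ND, idx (k - 1) < idx k ∧ idx k ≤ N)
    (hmin : ∀ k ∈ Finset.Icc 1 ND, ∀ i, idx (k - 1) < i → i ≤ N →
      (∑ j ∈ Finset.Ioc (idx (k - 1)) (idx k), E j) / (t (idx k + 1) - t (idx (k - 1) + 1))
        ≤ (∑ j ∈ Finset.Ioc (idx (k - 1)) i, E j) / (t (i + 1) - t (idx (k - 1) + 1)))
    (hleast : ∀ k ∈ Finset.Icc 1 ND, ∀ i, idx (k - 1) < i → i < idx k →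
      (∑ j ∈ Finset.Ioc (idx (k - 1)) (idx k), E j) / (t (idx k + 1) - t (idx (k - 1) + 1))
        < (∑ j ∈ Finset.Ioc (idx (k - 1)) i, E j) / (t (i + 1) - t (idx (k - 1) + 1))) :
    ∀ k ∈ Finset.Icc 1 ND, ∀ τ : ℝ,
      t (idx (k - 1) + 1) ≤ τ → τ ≤ t (idx k + 1) →
      (∑ m ∈ Finset.Icc 1 (k - 1), ∑ j ∈ Finset.Ioc (idx (m - 1)) (idx m), E j)
        + ((∑ j ∈ Finset.Ioc (idx (k - 1)) (idx k), E j)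
            / (t (idx k + 1) - t (idx (k - 1) + 1))) * (τ - t (idx (k - 1) + 1))
      ≤ ∑ i ∈ (Finset.Icc 1 N).filter (fun i => t i ≤ τ), E i := by
  intro k hk τ hτ1 hτ2
  obtain ⟨hk1, hkND⟩ := Finset.mem_Icc.mp hk
  obtain ⟨hab, hbN⟩ := hidx_mono k hk
  set a := idx (k - 1) with ha
  set b := idx k with hb
  have haN : a + 1 ≤ N := by omega
  have tmono : MonotoneOn t (Set.Icc 1 (N + 1)) := htmono.monotoneOn
  -- telescoping of consumed completed-interval energy
  have htel : ∑ m ∈ Finset.Icc 1 (k - 1), ∑ j ∈ Finset.Ioc (idx (m - 1)) (idx m), E j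
      = ∑ j ∈ Finset.Icc 1 a, E j := by
    rw [tele_aux E idx (k - 1) (fun m hm => by
      have := hidx_mono (m + 1) (Finset.mem_Icc.mpr ⟨by omega, by omega⟩)
      simpa using this.1.le)]
    rw [hidx0, ← Finset.Icc_add_one_left_eq_Ioc]
    rfl
  -- positivity of denominator and P
  have hden : t (a + 1) < t (b + 1) :=
    htmono ⟨by omega, by omega⟩ ⟨by omega, by omega⟩ (by omega)
  have hdenpos : (0 : ℝ) < t (b + 1) - t (a + 1) := by linarith
  have hSab : (0 : ℝ) < ∑ j ∈ Finset.Ioc a b, E j := by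
    apply Finset.sum_pos
    · intro j hj
      obtain ⟨hj1, hj2⟩ := Finset.mem_Ioc.mp hj
      exact hE j (Finset.mem_Icc.mpr ⟨by omega, by omega⟩)
    · exact ⟨b, Finset.mem_Ioc.mpr ⟨hab, le_refl _⟩⟩
  set P : ℝ := (∑ j ∈ Finset.Ioc a b, E j) / (t (b + 1) - t (a + 1)) with hP
  have hPpos : 0 < P := div_pos hSab hdenpos
  -- the filter set
  set S := (Finset.Icc 1 N).filter (fun i => t i ≤ τ) with hS
  have hmemS : a + 1 ∈ S := Finset.mem_filter.mpr
    ⟨Finset.mem_Icc.mpr ⟨by omega, haN⟩, hτ1⟩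
  have hne : S.Nonempty := ⟨a + 1, hmemS⟩
  set i' := S.max' hne with hi'
  have hi'mem := S.max'_mem hne
  obtain ⟨hi'Icc, hti'⟩ := Finset.mem_filter.mp hi'mem
  obtain ⟨hi'1, hi'N⟩ := Finset.mem_Icc.mp hi'Icc
  have hai' : a + 1 ≤ i' := S.le_max' _ hmemS
  have hSeq : S = Finset.Icc 1 i' := by
    ext i
    simp only [hS, Finset.mem_filter, Finset.mem_Icc]
    constructor
    · rintro ⟨⟨h1, h2⟩, h3⟩
      exact ⟨h1, S.le_max' i (Finset.mem_filter.mpr ⟨Finset.mem_Icc.mpr ⟨h1, h2⟩, h3⟩)⟩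
    · rintro ⟨h1, h2⟩
      refine ⟨⟨h1, by omega⟩, le_trans ?_ hti'⟩
      exact tmono ⟨by omega, by omega⟩ ⟨by omega, by omega⟩ h2
  rw [hSeq, htel]
  have hsplit : ∑ j ∈ Finset.Icc 1 i', E j
      = ∑ j ∈ Finset.Icc 1 a, E j + ∑ j ∈ Finset.Ioc a i', E j := by
    have e1 : Finset.Icc 1 i' = Finset.Ioc 0 i' := Finset.Icc_add_one_left_eq_Ioc 0 i'
    have e2 : Finset.Icc 1 a = Finset.Ioc 0 a := Finset.Icc_add_one_left_eq_Ioc 0 a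
    rw [e1, ← Finset.sum_Ioc_consecutive E (Nat.zero_le a) (by omega : a ≤ i'), ← e2]
  rw [hsplit]
  have key : P * (τ - t (a + 1)) ≤ ∑ j ∈ Finset.Ioc a i', E j := by
    rcases le_or_gt b i' with hbi' | hi'b
    · -- i' ≥ b
      have h1 : P * (τ - t (a + 1)) ≤ P * (t (b + 1) - t (a + 1)) := by
        apply mul_le_mul_of_nonneg_left (by linarith) hPpos.le
      have h2 : P * (t (b + 1) - t (a + 1)) = ∑ j ∈ Finset.Ioc a b, E j :=
        div_mul_cancel₀ _ hdenpos.ne'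
      have h3 : ∑ j ∈ Finset.Ioc a b, E j ≤ ∑ j ∈ Finset.Ioc a i', E j := by
        rw [← Finset.sum_Ioc_consecutive E (le_of_lt hab) hbi']
        have : (0:ℝ) ≤ ∑ j ∈ Finset.Ioc b i', E j := by
          apply Finset.sum_nonneg
          intro j hj
          obtain ⟨hj1, hj2⟩ := Finset.mem_Ioc.mp hj
          exact (hE j (Finset.mem_Icc.mpr ⟨by omega, by omega⟩)).le
        linarith
      linarith
    · -- a < i' < b
      have hi1N : i' + 1 ≤ N := by omega
      have hd2 : t (a + 1) < t (i' + 1) :=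
        htmono ⟨by omega, by omega⟩ ⟨by omega, by omega⟩ (by omega)
      have hτlt : τ < t (i' + 1) := by
        by_contra h
        push_neg at h
        have : i' + 1 ∈ S := Finset.mem_filter.mpr
          ⟨Finset.mem_Icc.mpr ⟨by omega, hi1N⟩, h⟩
        have := S.le_max' _ this
        omega
      have hm := hmin k hk i' (by omega) hi'N
      rw [← hP] at hm
      have h1 : P * (τ - t (a + 1)) ≤ P * (t (i' + 1) - t (a + 1)) :=
        mul_le_mul_of_nonneg_left (by linarith) hPpos.le
      have h2 : P * (t (i' + 1) - t (a + 1))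
          ≤ ((∑ j ∈ Finset.Ioc a i', E j) / (t (i' + 1) - t (a + 1)))
              * (t (i' + 1) - t (a + 1)) :=
        mul_le_mul_of_nonneg_right hm (by linarith)
      have h3 : ((∑ j ∈ Finset.Ioc a i', E j) / (t (i' + 1) - t (a + 1)))
          * (t (i' + 1) - t (a + 1)) = ∑ j ∈ Finset.Ioc a i', E j :=
        div_mul_cancel₀ _ (by linarith)
      linarith
  linarith
end

section
/- The DWF allocation maximizes single-hop EH throughput: among all measurable power allocations P(t) ≥ 0 on [0,T] satisfying the energy causality constraint ∫₀ᵗ P(τ)dτ ≤ E_Σ^EH(t) for all t, the DWF piecewise-constant allocation maximizes the throughput ∫₀ᵀ g(P(t))dt, where g is strictly concave and increasing. -/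
open MeasureTheory Set Finset

private lemma sum_Ioc_add_sum_Ioc (f : ℕ → ℝ) {a b c : ℕ} (hab : a ≤ b) (hbc : b ≤ c) :
    (∑ j ∈ Finset.Ioc a b, f j) + ∑ j ∈ Finset.Ioc b c, f j = ∑ j ∈ Finset.Ioc a c, f j := by
  rw [← Finset.sum_union (Finset.disjoint_left.2 fun x hx hx' => by
    simp only [Finset.mem_Ioc] at hx hx'; omega), Finset.Ioc_union_Ioc_eq_Ioc hab hbc]

private lemma exists_supergrad {g : ℝ → ℝ} (hconc : ConcaveOn ℝ (Set.Ici 0) g)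
    (hmono : StrictMonoOn g (Set.Ici 0)) {p : ℝ} (hp : 0 < p) :
    ∃ s : ℝ, 0 ≤ s ∧ ∀ x ∈ Set.Ici (0:ℝ), g x ≤ g p + s * (x - p) := by
  set A : Set ℝ := (fun x => (g x - g p) / (x - p)) '' Set.Ioi p with hA
  have hne : A.Nonempty := ⟨_, ⟨p + 1, by simp [Set.mem_Ioi], rfl⟩⟩
  have hub : ∀ x ∈ Set.Ioi p, (g x - g p) / (x - p) ≤ (g p - g (p/2)) / (p - p/2) := by
    intro x hx
    exact hconc.slope_anti_adjacent (by simp [Set.mem_Ici]; positivity)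
      (le_trans hp.le (le_of_lt hx)) (by linarith) hx
  have hbdd : BddAbove A := ⟨_, by rintro r ⟨x, hx, rfl⟩; exact hub x hx⟩
  refine ⟨sSup A, ?_, ?_⟩
  · have hmem : (g (p+1) - g p) / ((p+1) - p) ∈ A := ⟨p + 1, by simp [Set.mem_Ioi], rfl⟩
    have hpos : 0 < (g (p+1) - g p) / ((p+1) - p) := by
      have : g p < g (p+1) := hmono (Set.mem_Ici.2 hp.le) (Set.mem_Ici.2 (by linarith)) (by linarith)
      have h1 : (p:ℝ) + 1 - p = 1 := by ring
      rw [h1, div_one]; linarith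
    exact le_trans hpos.le (le_csSup hbdd hmem)
  · intro x hx
    rcases lt_trichotomy x p with hlt | heq | hgt
    · have hub' : ∀ r ∈ A, r ≤ (g p - g x) / (p - x) := by
        rintro r ⟨y, hy, rfl⟩
        exact hconc.slope_anti_adjacent hx (Set.mem_Ici.2 (le_trans (Set.mem_Ici.1 hx) (by linarith [le_of_lt (Set.mem_Ioi.1 hy)] : x ≤ y))) hlt hy
      have hle : sSup A ≤ (g p - g x) / (p - x) := csSup_le hne hub'
      have hpx : (0:ℝ) < p - x := by linarith
      have := (le_div_iff₀ hpx).1 hle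
      nlinarith
    · subst heq; simp
    · have hmem : (g x - g p) / (x - p) ∈ A := ⟨x, hgt, rfl⟩
      have hle : (g x - g p) / (x - p) ≤ sSup A := le_csSup hbdd hmem
      have hxp : (0:ℝ) < x - p := by linarith
      have := (div_le_iff₀ hxp).1 hle
      linarith

private lemma abel_bound (s D : ℕ → ℝ) (hD0 : D 0 = 0) :
    ∀ n : ℕ, (∀ k, 1 ≤ k → k < n → s (k+1) ≤ s k) → (∀ k, 1 ≤ k → k ≤ n → D k ≤ 0) →
      ∑ k ∈ Finset.Icc 1 n, s k * (D k - D (k-1)) ≤ s n * D n := by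
  intro n
  induction n with
  | zero => intro _ _; simp [hD0]
  | succ n ih =>
    intro hs hD
    rw [Finset.sum_Icc_succ_top (by omega : 1 ≤ n + 1)]
    have h1 := ih (fun k hk hk' => hs k hk (by omega)) (fun k hk hk' => hD k hk (by omega))
    simp only [Nat.add_sub_cancel]
    rcases Nat.eq_zero_or_pos n with h | h
    · subst h; simp [hD0]
    · have hsn : s (n+1) ≤ s n := hs n h (by omega)
      have hDn : D n ≤ 0 := hD n h (by omega)
      nlinarith [mul_nonpos_of_nonneg_of_nonpos (by linarith : (0:ℝ) ≤ s n - s (n+1)) hDn]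

private lemma jensen_Ioc {g : ℝ → ℝ} (hconc : ConcaveOn ℝ (Set.Ici 0) g)
    (hcont : ContinuousOn g (Set.Ici 0)) {f : ℝ → ℝ} {a b : ℝ} (hab : a < b)
    (hf : IntegrableOn f (Set.Ioc a b)) (hgf : IntegrableOn (fun x => g (f x)) (Set.Ioc a b))
    (hnn : ∀ᵐ x ∂(volume.restrict (Set.Ioc a b)), f x ∈ Set.Ici (0:ℝ)) :
    ∫ x in Set.Ioc a b, g (f x) ≤ (b - a) * g ((∫ x in Set.Ioc a b, f x) / (b - a)) := by
  set μ := volume.restrict (Set.Ioc a b) with hμ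
  have hμuniv : μ Set.univ = ENNReal.ofReal (b - a) := by
    simp [hμ, Measure.restrict_apply_univ, Real.volume_Ioc]
  haveI : IsFiniteMeasure μ := ⟨by rw [hμuniv]; exact ENNReal.ofReal_lt_top⟩
  haveI : NeZero μ := ⟨by
    intro h
    rw [h] at hμuniv
    simp only [Measure.coe_zero, Pi.zero_apply] at hμuniv
    have : b - a ≤ 0 := by
      by_contra hc
      exact absurd hμuniv.symm (by simp [ENNReal.ofReal_eq_zero]; linarith)
    linarith⟩
  have H := hconc.le_map_average hcont isClosed_Ici hnn hf hgf
  rw [average_eq, average_eq, measureReal_def, hμuniv, ENNReal.toReal_ofReal (by linarith)] at H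
  simp only [smul_eq_mul] at H
  have hba : (0:ℝ) < b - a := by linarith
  rw [inv_mul_le_iff₀ hba] at H
  refine le_trans H (le_of_eq ?_)
  rw [inv_mul_eq_div]
/-- The DWF allocation maximizes single-hop EH throughput: any measurable causal power
allocation (never consuming more energy than harvested) delivers at most the throughput
of the DWF piecewise-constant allocation, namely
`∑_k (length of k-th DWF interval) * g(P_k)`. -/
theorem stmt5 (g : ℝ → ℝ) (N ND : ℕ) (T : ℝ) (t : ℕ → ℝ) (E : ℕ → ℝ)
    (hg_concave : StrictConcaveOn ℝ (Set.Ici 0) g)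
    (hg_mono : StrictMonoOn g (Set.Ici 0))
    (hg_cont : ContinuousOn g (Set.Ici 0))
    (hg0 : g 0 = 0)
    (hN : 1 ≤ N) (hND : 1 ≤ ND)
    (ht1 : t 1 = 0) (htT : t (N + 1) = T) (hT : 0 < T)
    (htmono : StrictMonoOn t (Set.Icc 1 (N + 1)))
    (hE : ∀ i ∈ Finset.Icc 1 N, 0 < E i)
    (idx : ℕ → ℕ) (hidx0 : idx 0 = 0) (hidxND : idx ND = N)
    (hidx_mono : ∀ k ∈ Finset.Icc 1 ND, idx (k - 1) < idx k ∧ idx k ≤ N)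
    (hmin : ∀ k ∈ Finset.Icc 1 ND, ∀ i, idx (k - 1) < i → i ≤ N →
      (∑ j ∈ Finset.Ioc (idx (k - 1)) (idx k), E j) / (t (idx k + 1) - t (idx (k - 1) + 1))
        ≤ (∑ j ∈ Finset.Ioc (idx (k - 1)) i, E j) / (t (i + 1) - t (idx (k - 1) + 1)))
    (hleast : ∀ k ∈ Finset.Icc 1 ND, ∀ i, idx (k - 1) < i → i < idx k →
      (∑ j ∈ Finset.Ioc (idx (k - 1)) (idx k), E j) / (t (idx k + 1) - t (idx (k - 1) + 1))
        < (∑ j ∈ Finset.Ioc (idx (k - 1)) i, E j) / (t (i + 1) - t (idx (k - 1) + 1)))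
    (P : ℝ → ℝ) (hPmeas : Measurable P)
    (hPnonneg : ∀ s ∈ Set.Icc (0:ℝ) T, 0 ≤ P s)
    (hPint : IntervalIntegrable P volume 0 T)
    (hgPint : IntervalIntegrable (fun s => g (P s)) volume 0 T)
    (hcausal : ∀ τ ∈ Set.Icc (0:ℝ) T,
      (∫ s in (0:ℝ)..τ, P s) ≤ ∑ i ∈ (Finset.Icc 1 N).filter (fun i => t i ≤ τ), E i) :
    (∫ s in (0:ℝ)..T, g (P s))
      ≤ ∑ k ∈ Finset.Icc 1 ND,
          (t (idx k + 1) - t (idx (k - 1) + 1))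
            * g ((∑ j ∈ Finset.Ioc (idx (k - 1)) (idx k), E j)
                  / (t (idx k + 1) - t (idx (k - 1) + 1))) := by
  classical
  obtain ⟨a, ha⟩ : ∃ a : ℕ → ℝ, ∀ m, a m = t (idx m + 1) := ⟨_, fun _ => rfl⟩
  obtain ⟨S, hSdef⟩ : ∃ S : ℕ → ℝ, ∀ k, S k = ∑ j ∈ Finset.Ioc (idx (k - 1)) (idx k), E j :=
    ⟨_, fun _ => rfl⟩
  obtain ⟨F, hF⟩ : ∃ F : ℝ → ℝ, ∀ τ, F τ = ∫ s in (0:ℝ)..τ, P s := ⟨_, fun _ => rfl⟩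
  simp only [← ha, ← hSdef]
  -- basic index facts
  have hidxle : ∀ k, k ≤ ND → idx k ≤ N := by
    intro k hk
    rcases Nat.eq_zero_or_pos k with h | h
    · subst h; rw [hidx0]; omega
    · exact (hidx_mono k (Finset.mem_Icc.2 ⟨h, hk⟩)).2
  have hidxlt : ∀ j k : ℕ, j < k → k ≤ ND → idx j < idx k := by
    intro j k hjk
    induction k with
    | zero => omega
    | succ n ih =>
      intro hnd
      have hstep : idx n < idx (n + 1) := by
        have := (hidx_mono (n + 1) (Finset.mem_Icc.2 ⟨by omega, hnd⟩)).1
        simpa using this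
      rcases Nat.lt_or_ge j n with h | h
      · exact lt_trans (ih h (by omega)) hstep
      · have : j = n := by omega
        subst this; exact hstep
  have htle : ∀ i j : ℕ, 1 ≤ i → i ≤ j → j ≤ N + 1 → t i ≤ t j := by
    intro i j h1 hij hj
    rcases eq_or_lt_of_le hij with h | h
    · subst h; exact le_rfl
    · exact (htmono (Set.mem_Icc.2 ⟨h1, by omega⟩) (Set.mem_Icc.2 ⟨by omega, hj⟩) h).le
  have halt : ∀ j k : ℕ, j < k → k ≤ ND → a j < a k := by
    intro j k hjk hk
    rw [ha, ha]
    exact htmono (Set.mem_Icc.2 ⟨by omega, by have := hidxle j (by omega); omega⟩)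
      (Set.mem_Icc.2 ⟨by omega, by have := hidxle k hk; omega⟩)
      (by have := hidxlt j k hjk hk; omega)
  have hamono : ∀ j k : ℕ, j ≤ k → k ≤ ND → a j ≤ a k := by
    intro j k hjk hk
    rcases eq_or_lt_of_le hjk with h | h
    · subst h; exact le_rfl
    · exact (halt j k h hk).le
  have ha0 : a 0 = 0 := by rw [ha, hidx0]; exact ht1
  have haND : a ND = T := by rw [ha, hidxND]; exact htT
  have hamem : ∀ k, k ≤ ND → a k ∈ Set.Icc (0:ℝ) T := by
    intro k hk
    exact ⟨ha0 ▸ hamono 0 k (Nat.zero_le _) hk, haND ▸ hamono k ND hk le_rfl⟩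
  have hL : ∀ k, 1 ≤ k → k ≤ ND → 0 < a k - a (k - 1) := by
    intro k h1 h2
    have := halt (k - 1) k (by omega) h2
    linarith
  have hSpos : ∀ k, 1 ≤ k → k ≤ ND → 0 < S k := by
    intro k h1 h2
    rw [hSdef]
    refine Finset.sum_pos (fun j hj => ?_) ⟨idx k, Finset.mem_Ioc.2
      ⟨hidxlt (k - 1) k (by omega) h2, le_rfl⟩⟩
    rw [Finset.mem_Ioc] at hj
    exact hE j (Finset.mem_Icc.2 ⟨by omega, le_trans hj.2 (hidxle k h2)⟩)
  have hWpos : ∀ k, 1 ≤ k → k ≤ ND → 0 < S k / (a k - a (k - 1)) :=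
    fun k h1 h2 => div_pos (hSpos k h1 h2) (hL k h1 h2)
  -- integrability on subintervals
  have hPIoc : IntegrableOn P (Set.Ioc 0 T) :=
    (intervalIntegrable_iff_integrableOn_Ioc_of_le hT.le).1 hPint
  have hgPIoc : IntegrableOn (fun s => g (P s)) (Set.Ioc 0 T) :=
    (intervalIntegrable_iff_integrableOn_Ioc_of_le hT.le).1 hgPint
  have hP' : ∀ c d : ℝ, 0 ≤ c → c ≤ d → d ≤ T → IntervalIntegrable P volume c d :=
    fun c d h0 hcd hdT => (intervalIntegrable_iff_integrableOn_Ioc_of_le hcd).2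
      (hPIoc.mono_set (Set.Ioc_subset_Ioc h0 hdT))
  have hgP' : ∀ c d : ℝ, 0 ≤ c → c ≤ d → d ≤ T →
      IntervalIntegrable (fun s => g (P s)) volume c d :=
    fun c d h0 hcd hdT => (intervalIntegrable_iff_integrableOn_Ioc_of_le hcd).2
      (hgPIoc.mono_set (Set.Ioc_subset_Ioc h0 hdT))
  -- telescoping sums of S
  have hIoc0 : Finset.Ioc 0 N = Finset.Icc 1 N := by
    ext x; simp only [Finset.mem_Ioc, Finset.mem_Icc]; omega
  have telescope : ∀ k, k ≤ ND → ∑ m ∈ Finset.Icc 1 k, S m = ∑ j ∈ Finset.Ioc 0 (idx k), E j := by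
    intro k
    induction k with
    | zero => intro _; simp [hidx0]
    | succ n ih =>
      intro h
      rw [Finset.sum_Icc_succ_top (by omega : 1 ≤ n + 1), ih (by omega), hSdef]
      simp only [Nat.add_sub_cancel]
      exact sum_Ioc_add_sum_Ioc E (Nat.zero_le _) (hidxlt n (n + 1) (by omega) h).le
  -- cumulative causality at DWF points
  have hDle : ∀ k, 1 ≤ k → k ≤ ND → F (a k) ≤ ∑ m ∈ Finset.Icc 1 k, S m := by
    intro k h1 h2
    rw [telescope k h2]
    rcases eq_or_lt_of_le h2 with hEnd | hkND
    · subst hEnd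
      rw [hF, haND, hidxND, hIoc0]
      refine le_trans (hcausal T ⟨hT.le, le_rfl⟩) (le_of_eq ?_)
      rw [Finset.filter_true_of_mem]
      intro i hi
      rw [Finset.mem_Icc] at hi
      calc t i ≤ t (N + 1) := htle i (N + 1) hi.1 (by omega) le_rfl
        _ = T := htT
    · -- k < ND : limit argument from the left
      have hidxk1 : 1 ≤ idx k := by have := hidxlt 0 k (by omega) h2; rw [hidx0] at this; omega
      have hidxkN : idx k ≤ N := hidxle k h2
      have hc0 : 0 < a k := ha0 ▸ halt 0 k (by omega) h2
      have hcT : a k < T := haND ▸ halt k ND hkND le_rfl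
      have hm_lt : t (idx k) < a k := by
        rw [ha]
        exact htmono (Set.mem_Icc.2 ⟨hidxk1, by omega⟩) (Set.mem_Icc.2 ⟨by omega, by omega⟩)
          (by omega)
      have hm0 : 0 ≤ t (idx k) := ht1 ▸ htle 1 (idx k) le_rfl hidxk1 (by omega)
      have key : ∀ τ ∈ Set.Ico (t (idx k)) (a k), F τ ≤ ∑ j ∈ Finset.Ioc 0 (idx k), E j := by
        intro τ hτ
        have hτIcc : τ ∈ Set.Icc (0:ℝ) T := ⟨le_trans hm0 hτ.1, le_trans hτ.2.le hcT.le⟩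
        rw [hF]
        refine le_trans (hcausal τ hτIcc) (le_of_eq ?_)
        congr 1
        ext i
        simp only [Finset.mem_filter, Finset.mem_Icc, Finset.mem_Ioc]
        constructor
        · rintro ⟨⟨hi1, hiN⟩, hti⟩
          refine ⟨by omega, ?_⟩
          by_contra hcon
          have : a k ≤ t i := by
            rw [ha]
            exact htle (idx k + 1) i (by omega) (by omega) (by omega)
          have : a k ≤ τ := le_trans this hti
          exact absurd this (not_le.2 hτ.2)
        · rintro ⟨hi1, hik⟩
          refine ⟨⟨by omega, le_trans hik hidxkN⟩, ?_⟩
          exact le_trans (htle i (idx k) (by omega) hik (by omega)) hτ.1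
      have hFcont : ContinuousOn F (Set.Icc 0 T) := by
        have h1 : ContinuousOn (fun τ => ∫ s in (0:ℝ)..τ, P s) (Set.uIcc 0 T) :=
          intervalIntegral.continuousOn_primitive_interval' hPint Set.left_mem_uIcc
        rw [Set.uIcc_of_le hT.le] at h1
        exact (funext hF : F = _) ▸ h1
      have hsub : Set.Ico (t (idx k)) (a k) ⊆ Set.Icc 0 T :=
        fun x hx => ⟨le_trans hm0 hx.1, le_trans hx.2.le hcT.le⟩
      haveI hne : (nhdsWithin (a k) (Set.Ico (t (idx k)) (a k))).NeBot := by
        refine mem_closure_iff_nhdsWithin_neBot.1 ?_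
        rw [closure_Ico (ne_of_lt hm_lt)]
        exact ⟨hm_lt.le, le_rfl⟩
      have htend : Filter.Tendsto F (nhdsWithin (a k) (Set.Ico (t (idx k)) (a k)))
          (nhds (F (a k))) :=
        (hFcont (a k) ⟨hc0.le, hcT.le⟩).mono_left (nhdsWithin_mono _ hsub)
      exact le_of_tendsto htend (Filter.eventually_of_mem self_mem_nhdsWithin key)
  -- splitting the integral
  have hreindex : Finset.Icc 1 ND =
      (Finset.range ND).map ⟨fun n => n + 1, fun x y h => by simpa using h⟩ := by
    ext x
    simp only [Finset.mem_Icc, Finset.mem_map, Finset.mem_range, Function.Embedding.coeFn_mk]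
    constructor
    · rintro ⟨h1, h2⟩; exact ⟨x - 1, by omega, show x - 1 + 1 = x by omega⟩
    · rintro ⟨y, hy, rfl⟩; show 1 ≤ y + 1 ∧ y + 1 ≤ ND; omega
  have hsplit : ∫ s in (0:ℝ)..T, g (P s)
      = ∑ k ∈ Finset.Icc 1 ND, ∫ x in Set.Ioc (a (k - 1)) (a k), g (P x) := by
    have h1 : ∑ k ∈ Finset.range ND, ∫ x in (a k)..(a (k + 1)), g (P x)
        = ∫ x in (a 0)..(a ND), g (P x) :=
      intervalIntegral.sum_integral_adjacent_intervals (fun k hk =>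
        hgP' (a k) (a (k + 1)) (hamem k (by omega)).1 (hamono k (k + 1) (by omega) (by omega))
          (hamem (k + 1) (by omega)).2)
    rw [ha0, haND] at h1
    rw [hreindex, Finset.sum_map, ← h1]
    refine Finset.sum_congr rfl fun k hk => ?_
    rw [Finset.mem_range] at hk
    show _ = ∫ x in Set.Ioc (a k) (a (k + 1)), g (P x)
    exact intervalIntegral.integral_of_le (hamono k (k + 1) (by omega) (by omega))
  -- supergradients
  have hσex : ∀ p : ℝ, 0 < p → ∃ s : ℝ, 0 ≤ s ∧ ∀ x ∈ Set.Ici (0:ℝ), g x ≤ g p + s * (x - p) :=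
    fun p hp => exists_supergrad hg_concave.concaveOn hg_mono hp
  choose! σ hσ0 hσle using hσex
  -- DWF powers are nondecreasing
  have hWmono : ∀ k, 1 ≤ k → k + 1 ≤ ND →
      S k / (a k - a (k - 1)) ≤ S (k + 1) / (a (k + 1) - a k) := by
    intro k h1 h2
    have hkmem : k ∈ Finset.Icc 1 ND := Finset.mem_Icc.2 ⟨h1, by omega⟩
    have hik1 : idx (k - 1) < idx (k + 1) := hidxlt (k - 1) (k + 1) (by omega) h2
    have h3 := hmin k hkmem (idx (k + 1)) hik1 (hidxle (k + 1) h2)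
    rw [← ha, ← ha, ← ha, ← hSdef] at h3
    have hsum : ∑ j ∈ Finset.Ioc (idx (k - 1)) (idx (k + 1)), E j = S k + S (k + 1) := by
      rw [hSdef, hSdef]
      simp only [Nat.add_sub_cancel]
      exact (sum_Ioc_add_sum_Ioc E (hidxlt (k - 1) k (by omega) (by omega)).le
        (hidxlt k (k + 1) (by omega) h2).le).symm
    rw [hsum] at h3
    have hLk : 0 < a k - a (k - 1) := hL k h1 (by omega)
    have hLk1 : 0 < a (k + 1) - a k := by
      have := halt k (k + 1) (by omega) h2; linarith
    have hLL : 0 < a (k + 1) - a (k - 1) := by linarith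
    rw [div_le_div_iff₀ hLk hLL] at h3
    rw [div_le_div_iff₀ hLk hLk1]
    nlinarith
  -- the Abel summation bound
  have habel : ∑ k ∈ Finset.Icc 1 ND,
      σ (S k / (a k - a (k - 1)))
        * ((F (a k) - ∑ m ∈ Finset.Icc 1 k, S m) - (F (a (k - 1)) - ∑ m ∈ Finset.Icc 1 (k - 1), S m))
      ≤ 0 := by
    have hD0 : F (a 0) - ∑ m ∈ Finset.Icc 1 0, S m = 0 := by
      rw [ha0, hF]
      simp
    have h := abel_bound (fun k => σ (S k / (a k - a (k - 1))))
      (fun k => F (a k) - ∑ m ∈ Finset.Icc 1 k, S m) hD0 ND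
      (fun k hk1 hk2 => ?_) (fun k hk1 hk2 => sub_nonpos.2 (hDle k hk1 hk2))
    · refine le_trans h ?_
      exact mul_nonpos_of_nonneg_of_nonpos (hσ0 _ (hWpos ND hND le_rfl))
        (sub_nonpos.2 (hDle ND hND le_rfl))
    · -- σ antitone along the DWF powers
      simp only [Nat.add_sub_cancel]
      have hW := hWmono k hk1 (by omega)
      set p := S k / (a k - a (k - 1)) with hp
      set q := S (k + 1) / (a (k + 1) - a k) with hq
      have hppos : 0 < p := hWpos k hk1 (by omega)
      have hqpos : 0 < q := by
        have h1 := hSpos (k + 1) (by omega) (by omega)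
        have h2 : 0 < a (k + 1) - a k := by
          have := halt k (k + 1) (by omega) (by omega); linarith
        rw [hq]; exact div_pos h1 h2
      rcases eq_or_lt_of_le hW with h | h
      · rw [h]
      · have h1 := hσle p hppos q (Set.mem_Ici.2 hqpos.le)
        have h2 := hσle q hqpos p (Set.mem_Ici.2 hppos.le)
        nlinarith
  -- per-interval Jensen + supergradient comparison
  rw [hsplit]
  have hjensen : ∀ k ∈ Finset.Icc 1 ND,
      ∫ x in Set.Ioc (a (k - 1)) (a k), g (P x)
        ≤ (a k - a (k - 1))
            * g ((∫ x in Set.Ioc (a (k - 1)) (a k), P x) / (a k - a (k - 1))) := by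
    intro k hk
    rw [Finset.mem_Icc] at hk
    have hsub : Set.Ioc (a (k - 1)) (a k) ⊆ Set.Ioc 0 T :=
      Set.Ioc_subset_Ioc (hamem (k - 1) (by omega)).1 (hamem k hk.2).2
    refine jensen_Ioc hg_concave.concaveOn hg_cont (halt (k - 1) k (by omega) hk.2)
      (hPIoc.mono_set hsub) (hgPIoc.mono_set hsub) ?_
    refine (ae_restrict_iff' measurableSet_Ioc).2 (Filter.Eventually.of_forall fun x hx => ?_)
    exact Set.mem_Ici.2 (hPnonneg x ⟨le_trans (hamem (k - 1) (by omega)).1 hx.1.le,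
      le_trans hx.2 (hamem k hk.2).2⟩)
  refine le_trans (Finset.sum_le_sum hjensen) ?_
  rw [← sub_nonpos, ← Finset.sum_sub_distrib]
  refine le_trans (Finset.sum_le_sum (fun k hk => ?_)) habel
  rw [Finset.mem_Icc] at hk
  have hLk : 0 < a k - a (k - 1) := hL k hk.1 hk.2
  have hIk : 0 ≤ ∫ x in Set.Ioc (a (k - 1)) (a k), P x := by
    refine setIntegral_nonneg measurableSet_Ioc (fun x hx => ?_)
    exact hPnonneg x ⟨le_trans (hamem (k - 1) (by omega)).1 hx.1.le,
      le_trans hx.2 (hamem k hk.2).2⟩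
  have hsum_diff : (∑ m ∈ Finset.Icc 1 k, S m) - ∑ m ∈ Finset.Icc 1 (k - 1), S m = S k := by
    have hk' : k - 1 + 1 = k := by omega
    have h := Finset.sum_Icc_succ_top (by omega : 1 ≤ k - 1 + 1) S
    rw [hk'] at h
    rw [h]; ring
  have hF_diff : F (a k) - F (a (k - 1)) = ∫ x in Set.Ioc (a (k - 1)) (a k), P x := by
    rw [hF, hF, ← intervalIntegral.integral_of_le (halt (k - 1) k (by omega) hk.2).le]
    exact intervalIntegral.integral_interval_sub_left
      (hP' 0 (a k) le_rfl (hamem k hk.2).1 (hamem k hk.2).2)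
      (hP' 0 (a (k - 1)) le_rfl (hamem (k - 1) (by omega)).1 (hamem (k - 1) (by omega)).2)
  set I := ∫ x in Set.Ioc (a (k - 1)) (a k), P x with hI
  have hsup := hσle (S k / (a k - a (k - 1))) (hWpos k hk.1 hk.2) (I / (a k - a (k - 1)))
    (Set.mem_Ici.2 (div_nonneg hIk hLk.le))
  have hDdiff : (F (a k) - ∑ m ∈ Finset.Icc 1 k, S m)
      - (F (a (k - 1)) - ∑ m ∈ Finset.Icc 1 (k - 1), S m) = I - S k := by
    rw [← hF_diff] at *
    linarith [hsum_diff]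
  rw [hDdiff]
  have hmul := mul_le_mul_of_nonneg_left hsup hLk.le
  have hexp : (a k - a (k - 1)) * (g (S k / (a k - a (k - 1)))
      + σ (S k / (a k - a (k - 1))) * (I / (a k - a (k - 1)) - S k / (a k - a (k - 1))))
      = (a k - a (k - 1)) * g (S k / (a k - a (k - 1)))
        + σ (S k / (a k - a (k - 1))) * (I - S k) := by
    field_simp
  rw [hexp] at hmul
  linarith
end

section
/- Monotonicity of the boundary function f_k⁻¹: fix T^D > 0 and E^D > 0, and let g be strictly concave, strictly increasing, continuous with g(0)=0. Then the function f⁻¹(T^S) = (T^D − T^S) · g⁻¹( (T^S/(T^D − T^S)) · g(E^D/T^S) ) is strictly increasing in T^S on (0, T^D). -/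
open Set

/-- Monotonicity of the boundary function `f⁻¹`: with `T^D, E^D > 0` fixed and `g`
strictly concave, strictly increasing, continuous with `g 0 = 0`, the relay energy
`f⁻¹(T^S) = (T^D − T^S) · g⁻¹((T^S/(T^D − T^S)) · g(E^D/T^S))` required to balance the
data is strictly increasing in the source period `T^S` on `(0, T^D)`. -/
theorem stmt7 (g ginv : ℝ → ℝ) (TD ED : ℝ)
    (hTD : 0 < TD) (hED : 0 < ED)
    (hg_concave : StrictConcaveOn ℝ (Ici 0) g)
    (hg_mono : StrictMonoOn g (Ici 0))
    (hg_cont : ContinuousOn g (Ici 0))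
    (hg0 : g 0 = 0)
    (hginv_left : ∀ x ∈ Ici (0:ℝ), ginv (g x) = x)
    (hginv_right : ∀ y ∈ Ici (0:ℝ), ginv y ∈ Ici (0:ℝ) ∧ g (ginv y) = y) :
    StrictMonoOn
      (fun TS => (TD - TS) * ginv ((TS / (TD - TS)) * g (ED / TS)))
      (Ioo 0 TD) := by
  -- key strict superhomogeneity of concave g with g 0 = 0
  have key : ∀ x l : ℝ, 0 < x → 0 < l → l < 1 → l * g x < g (l * x) := by
    intro x l hx hl hl1
    have h := hg_concave.2 (mem_Ici.mpr le_rfl) (mem_Ici.mpr hx.le) hx.ne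
      (by linarith : (0:ℝ) < 1 - l) hl (by ring)
    simpa [hg0] using h
  -- ginv is strictly monotone on nonnegatives
  have ginv_mono : ∀ y1 y2 : ℝ, 0 ≤ y1 → y1 < y2 → ginv y1 < ginv y2 := by
    intro y1 y2 h1 h12
    obtain ⟨hm1, he1⟩ := hginv_right y1 (mem_Ici.mpr h1)
    obtain ⟨hm2, he2⟩ := hginv_right y2 (mem_Ici.mpr (le_trans h1 h12.le))
    by_contra h
    push_neg at h
    have := (hg_mono.le_iff_le hm2 hm1).mpr h
    rw [he1, he2] at this
    linarith
  have ginv_pos : ∀ y : ℝ, 0 < y → 0 < ginv y := by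
    intro y hy
    obtain ⟨hm, he⟩ := hginv_right y (mem_Ici.mpr hy.le)
    rcases lt_or_eq_of_le (mem_Ici.mp hm) with h | h
    · exact h
    · exfalso; rw [← h, hg0] at he; linarith
  intro a ha b hb hab
  obtain ⟨ha0, haT⟩ := ha
  obtain ⟨hb0, hbT⟩ := hb
  have hta0 : 0 < TD - a := by linarith
  have htb0 : 0 < TD - b := by linarith
  have htab : TD - b < TD - a := by linarith
  have hga : 0 < g (ED / a) := by
    have h := hg_mono (mem_Ici.mpr le_rfl) (mem_Ici.mpr (by positivity : (0:ℝ) ≤ ED / a))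
      (by positivity)
    rw [hg0] at h; exact h
  have hgb : 0 < g (ED / b) := by
    have h := hg_mono (mem_Ici.mpr le_rfl) (mem_Ici.mpr (by positivity : (0:ℝ) ≤ ED / b))
      (by positivity)
    rw [hg0] at h; exact h
  set Da := a * g (ED / a) with hDa_def
  set Db := b * g (ED / b) with hDb_def
  have hDa : 0 < Da := mul_pos ha0 hga
  have hDb : 0 < Db := mul_pos hb0 hgb
  -- Da < Db
  have hDab : Da < Db := by
    have h := key (ED / a) (a / b) (by positivity) (by positivity) ((div_lt_one hb0).mpr hab)
    have harg : (a / b) * (ED / a) = ED / b := by field_simp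
    rw [harg] at h
    have h2 := mul_lt_mul_of_pos_left h hb0
    have : b * (a / b * g (ED / a)) = Da := by field_simp [hDa_def]; rfl
    rw [this] at h2
    exact h2
  -- rewrite goal in terms of Da, Db
  simp only
  have hra : a / (TD - a) * g (ED / a) = Da / (TD - a) := by
    rw [hDa_def, div_mul_eq_mul_div]
  have hrb : b / (TD - b) * g (ED / b) = Db / (TD - b) := by
    rw [hDb_def, div_mul_eq_mul_div]
  rw [hra, hrb]
  -- step 1: tb * ginv (Da/tb) < tb * ginv (Db/tb)
  have s1 : (TD - b) * ginv (Da / (TD - b)) < (TD - b) * ginv (Db / (TD - b)) := by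
    apply mul_lt_mul_of_pos_left _ htb0
    exact ginv_mono _ _ (div_nonneg hDa.le htb0.le) (by gcongr)
  -- step 2: ta * ginv (Da/ta) < tb * ginv (Da/tb)
  have hDta : 0 < Da / (TD - a) := div_pos hDa hta0
  have hDtb : 0 < Da / (TD - b) := div_pos hDa htb0
  obtain ⟨hm1, he1⟩ := hginv_right _ (mem_Ici.mpr hDta.le)
  obtain ⟨hm2, he2⟩ := hginv_right _ (mem_Ici.mpr hDtb.le)
  have hx2pos : 0 < ginv (Da / (TD - b)) := ginv_pos _ hDtb
  have hk := key (ginv (Da / (TD - b))) ((TD - b) / (TD - a)) hx2pos (by positivity)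
    ((div_lt_one hta0).mpr htab)
  rw [he2] at hk
  have hval : (TD - b) / (TD - a) * (Da / (TD - b)) = Da / (TD - a) := by
    field_simp
  rw [hval, ← he1] at hk
  have hlt := (hg_mono.lt_iff_lt hm1
    (mem_Ici.mpr (by positivity : (0:ℝ) ≤ (TD - b) / (TD - a) * ginv (Da / (TD - b))))).mp hk
  have s2 : (TD - a) * ginv (Da / (TD - a)) < (TD - b) * ginv (Da / (TD - b)) := by
    calc (TD - a) * ginv (Da / (TD - a))
        < (TD - a) * ((TD - b) / (TD - a) * ginv (Da / (TD - b))) :=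
          mul_lt_mul_of_pos_left hlt hta0
      _ = (TD - b) * ginv (Da / (TD - b)) := by field_simp
  linarith
end

section
/- Half-duplex throughput upper bound in a single interval: consider a half-duplex two-hop link over an interval of length T^D with source energy budget E^D and relay peak power P_M^R, where at each instant only one of the source and relay transmits (P^S(t)·P^R(t)=0) and the delivered data is min(∫ g(P^S), ∫ g(P^R)). Then the delivered data is at most T^S* · g(E^D/T^S*) where T^S* ∈ (0,T^D) is the unique solution of T^S g(E^D/T^S) = (T^D − T^S) g(P_M^R), and this bound is achieved by the two-stage policy (source transmits at power E^D/T^S* for time T^S*, relay at P_M^R for time T^D − T^S*). -/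
open MeasureTheory Set

lemma exists_supergrad_s9 (g : ℝ → ℝ) (hg : ConcaveOn ℝ (Ici 0) g) {c : ℝ} (hc : 0 < c) :
    ∃ m : ℝ, ∀ x ∈ Ici (0:ℝ), g x ≤ g c + m * (x - c) := by
  set S : Set ℝ := (fun x => (g x - g c) / (x - c)) '' Ioi c with hS
  have hne : S.Nonempty := ⟨_, ⟨c + 1, by simp, rfl⟩⟩
  have hbdd : BddAbove S := by
    refine ⟨(g c - g (c/2)) / (c - c/2), ?_⟩
    rintro r ⟨z, hz, rfl⟩
    exact hg.slope_anti_adjacent (by simp [le_of_lt, hc.le]; positivity)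
      (le_of_lt (lt_trans hc hz)) (by linarith) hz
  refine ⟨sSup S, fun x hx => ?_⟩
  rcases lt_trichotomy x c with h | h | h
  · have hxc : ∀ r ∈ S, r ≤ (g c - g x) / (c - x) := by
      rintro r ⟨z, hz, rfl⟩
      exact hg.slope_anti_adjacent hx (le_of_lt (lt_trans hc hz)) h hz
    have h2 : sSup S * (c - x) ≤ g c - g x :=
      (le_div_iff₀ (by linarith : (0:ℝ) < c - x)).mp (csSup_le hne hxc)
    nlinarith
  · simp [h]
  · have h1 : (g x - g c) / (x - c) ≤ sSup S := le_csSup hbdd ⟨x, h, rfl⟩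
    rw [div_le_iff₀ (by linarith)] at h1
    linarith

/-- Half-duplex throughput upper bound in a single interval: for any feasible half-duplex
policy `(P^S, P^R)` with source energy `E^D` and relay peak power `P_M^R`, the delivered
data `min(∫ g(P^S), ∫ g(P^R))` is at most `T^S* · g(E^D/T^S*)`, where `T^S*` solves the
balance equation; the two-stage policy (source at `E^D/T^S*` for time `T^S*`, then relay
at `P_M^R`) achieves this bound. -/
theorem stmt9 (g : ℝ → ℝ) (TD ED PMR TSstar : ℝ)
    (hg_concave : StrictConcaveOn ℝ (Ici 0) g)
    (hg_mono : StrictMonoOn g (Ici 0))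
    (hg_cont : ContinuousOn g (Ici 0))
    (hg0 : g 0 = 0)
    (hTD : 0 < TD) (hED : 0 < ED) (hPMR : 0 < PMR)
    (hTS : TSstar ∈ Ioo 0 TD)
    (hbal : TSstar * g (ED / TSstar) = (TD - TSstar) * g PMR)
    (PS PR : ℝ → ℝ) (hPSmeas : Measurable PS) (hPRmeas : Measurable PR)
    (hPSnonneg : ∀ s ∈ Icc (0:ℝ) TD, 0 ≤ PS s)
    (hPRnonneg : ∀ s ∈ Icc (0:ℝ) TD, 0 ≤ PR s)
    (hhd : ∀ s ∈ Icc (0:ℝ) TD, PS s * PR s = 0)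
    (hPSint : IntervalIntegrable PS volume 0 TD)
    (hgPSint : IntervalIntegrable (fun s => g (PS s)) volume 0 TD)
    (hgPRint : IntervalIntegrable (fun s => g (PR s)) volume 0 TD)
    (henergy : (∫ s in (0:ℝ)..TD, PS s) ≤ ED)
    (hpeak : ∀ s ∈ Icc (0:ℝ) TD, PR s ≤ PMR) :
    min (∫ s in (0:ℝ)..TD, g (PS s)) (∫ s in (0:ℝ)..TD, g (PR s))
        ≤ TSstar * g (ED / TSstar) ∧
    min (∫ s in (0:ℝ)..TD, g (if s < TSstar then ED / TSstar else 0))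
        (∫ s in (0:ℝ)..TD, g (if s < TSstar then 0 else PMR))
      = TSstar * g (ED / TSstar) := by
  obtain ⟨hTS0, hTSD⟩ := hTS
  set c : ℝ := ED / TSstar with hc_def
  have hc : 0 < c := div_pos hED hTS0
  set G : ℝ := g c with hG_def
  set P : ℝ := g PMR with hP_def
  have hGpos : 0 < G := by
    have := hg_mono (le_refl (0:ℝ)) hc.le hc
    rwa [hg0] at this
  have hPpos : 0 < P := by
    have := hg_mono (le_refl (0:ℝ)) hPMR.le hPMR
    rwa [hg0] at this
  obtain ⟨m, hm⟩ := exists_supergrad_s9 g hg_concave.concaveOn hc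
  have hGmc : 0 ≤ G - m * c := by
    have := hm 0 (mem_Ici.mpr le_rfl); rw [hg0] at this; nlinarith
  have hmpos : 0 < m := by
    have h1 := hm (2 * c) (mem_Ici.mpr (by positivity))
    have h2 : G < g (2 * c) := hg_mono hc.le (by positivity : (0:ℝ) ≤ 2*c) (by linarith)
    nlinarith
  set D : ℝ := G - m * c + P with hD_def
  have hDpos : 0 < D := by positivity
  set lam : ℝ := P / D with hlam_def
  have hlam0 : 0 < lam := div_pos hPpos hDpos
  have hlam1 : lam ≤ 1 := by
    rw [hlam_def, div_le_one hDpos]; linarith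
  have hkey : lam * (G - m * c) = (1 - lam) * P := by
    field_simp [hlam_def]
    have h : lam * (G - m * c + P) = P := div_mul_cancel₀ P hDpos.ne'
    linear_combination h
  -- pointwise bound
  have hpt : ∀ s ∈ Icc (0:ℝ) TD,
      lam * g (PS s) + (1 - lam) * g (PR s) ≤ lam * m * PS s + (1 - lam) * P := by
    intro s hs
    by_cases hps : PS s = 0
    · have hgr : g (PR s) ≤ P := by
        rcases eq_or_lt_of_le (hpeak s hs) with h | h
        · rw [h]
        · exact (hg_mono (hPRnonneg s hs) hPMR.le h).le
      have hpsnn := hPSnonneg s hs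
      rw [hps, hg0]
      nlinarith
    · have hpr : PR s = 0 := by
        rcases mul_eq_zero.mp (hhd s hs) with h | h
        · exact absurd h hps
        · exact h
      have hsup := hm (PS s) (hPSnonneg s hs)
      rw [hpr, hg0]
      nlinarith
  -- integrate
  have hint_lhs : IntervalIntegrable
      (fun s => lam * g (PS s) + (1 - lam) * g (PR s)) volume 0 TD :=
    (hgPSint.const_mul lam).add (hgPRint.const_mul (1 - lam))
  have hint_rhs : IntervalIntegrable
      (fun s => lam * m * PS s + (1 - lam) * P) volume 0 TD :=
    (hPSint.const_mul (lam * m)).add intervalIntegrable_const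
  have hI := intervalIntegral.integral_mono_on hTD.le hint_lhs hint_rhs hpt
  rw [intervalIntegral.integral_add (hgPSint.const_mul lam) (hgPRint.const_mul (1 - lam)),
      intervalIntegral.integral_add (hPSint.const_mul (lam * m)) intervalIntegrable_const,
      intervalIntegral.integral_const_mul, intervalIntegral.integral_const_mul,
      intervalIntegral.integral_const_mul, intervalIntegral.integral_const,
      smul_eq_mul] at hI
  set X := ∫ s in (0:ℝ)..TD, g (PS s)
  set Y := ∫ s in (0:ℝ)..TD, g (PR s)
  have hEDc : ED = c * TSstar := by
    rw [hc_def]; field_simp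
  have hlamD : lam * (G - m * c + P) = P := div_mul_cancel₀ P hDpos.ne'
  have hfinal : lam * m * ED + (1 - lam) * P * TD = TSstar * G := by
    linear_combination (lam * m) * hEDc - TD * hkey + (TD - TSstar) * hlamD - (1 - lam) * hbal
  constructor
  · have h1 : min X Y ≤ lam * X + (1 - lam) * Y := by
      have := min_le_left X Y; have := min_le_right X Y
      nlinarith
    have h2 : lam * m * (∫ s in (0:ℝ)..TD, PS s) ≤ lam * m * ED :=
      mul_le_mul_of_nonneg_left henergy (by positivity)
    calc min X Y ≤ lam * X + (1 - lam) * Y := h1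
      _ ≤ lam * m * (∫ s in (0:ℝ)..TD, PS s) + (TD - 0) * ((1 - lam) * P) := hI
      _ ≤ lam * m * ED + (1 - lam) * P * TD := by nlinarith
      _ = TSstar * G := hfinal
  · -- achievability
    have e1 : (∫ s in (0:ℝ)..TD, g (if s < TSstar then ED / TSstar else 0))
        = TSstar * G := by
      have hfun : (fun s => g (if s < TSstar then ED / TSstar else 0))
          = (Iio TSstar).indicator (fun _ => G) := by
        funext s
        by_cases h : s < TSstar <;>
          simp [h, hg0, indicator_apply, mem_Iio, hG_def, hc_def]
      rw [hfun, intervalIntegral.integral_of_le hTD.le,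
          setIntegral_indicator measurableSet_Iio]
      have hset : Ioc (0:ℝ) TD ∩ Iio TSstar = Ioo 0 TSstar := by
        ext x
        simp only [mem_inter_iff, mem_Ioc, mem_Iio, mem_Ioo]
        constructor
        · rintro ⟨⟨h1, _⟩, h2⟩; exact ⟨h1, h2⟩
        · rintro ⟨h1, h2⟩; exact ⟨⟨h1, by linarith⟩, h2⟩
      rw [hset, setIntegral_const, Real.volume_real_Ioo_of_le (by linarith), smul_eq_mul,
          sub_zero]
    have e2 : (∫ s in (0:ℝ)..TD, g (if s < TSstar then 0 else PMR))
        = TSstar * G := by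
      have hfun : (fun s => g (if s < TSstar then 0 else PMR))
          = (Ici TSstar).indicator (fun _ => P) := by
        funext s
        by_cases h : s < TSstar <;>
          simp [h, hg0, indicator_apply, mem_Ici, not_le.mpr, hP_def, not_lt.mp]
      rw [hfun, intervalIntegral.integral_of_le hTD.le,
          setIntegral_indicator measurableSet_Ici]
      have hset : Ioc (0:ℝ) TD ∩ Ici TSstar = Icc TSstar TD := by
        ext x
        simp only [mem_inter_iff, mem_Ioc, mem_Ici, mem_Icc]
        constructor
        · rintro ⟨⟨_, h1⟩, h2⟩; exact ⟨h2, h1⟩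
        · rintro ⟨h1, h2⟩; exact ⟨⟨by linarith, h2⟩, h1⟩
      rw [hset, setIntegral_const, Real.volume_real_Icc_of_le (by linarith), smul_eq_mul]
      rw [hbal]
    rw [e1, e2, min_self]
end

section
/- Strict concavity of per-interval throughput in the relay energy: with T^D, E^D fixed and g strictly concave, strictly increasing, twice differentiable with g(0)=0, the function D(E^R) = (T^D − f(E^R)) · g( E^R / (T^D − f(E^R)) ), where T^S = f(E^R) is implicitly defined by T^S g(E^D/T^S) = (T^D − T^S) g(E^R/(T^D − T^S)), is strictly concave in E^R on its domain. -/
open Set Filter Topology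

/-- Nonstrict perspective-type concavity inequality. -/
lemma persp_le' {g : ℝ → ℝ} (hg : ConcaveOn ℝ (Ici 0) g)
    {u1 u2 E1 E2 a b : ℝ} (hu1 : 0 < u1) (hu2 : 0 < u2)
    (hE1 : 0 ≤ E1) (hE2 : 0 ≤ E2) (ha : 0 < a) (hb : 0 < b) (hab : a + b = 1) :
    a * (u1 * g (E1 / u1)) + b * (u2 * g (E2 / u2)) ≤
      (a * u1 + b * u2) * g ((a * E1 + b * E2) / (a * u1 + b * u2)) := by
  have hupos : 0 < a * u1 + b * u2 := by positivity
  have hw : a * u1 / (a * u1 + b * u2) + b * u2 / (a * u1 + b * u2) = 1 := by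
    field_simp
  have key := hg.2 (mem_Ici.2 (div_nonneg hE1 hu1.le)) (mem_Ici.2 (div_nonneg hE2 hu2.le))
      (by positivity) (by positivity) hw
  simp only [smul_eq_mul] at key
  have harg : a * u1 / (a * u1 + b * u2) * (E1 / u1) + b * u2 / (a * u1 + b * u2) * (E2 / u2)
      = (a * E1 + b * E2) / (a * u1 + b * u2) := by
    field_simp
  rw [harg] at key
  have h2 := mul_le_mul_of_nonneg_left key hupos.le
  calc a * (u1 * g (E1 / u1)) + b * (u2 * g (E2 / u2))
      = (a * u1 + b * u2) * (a * u1 / (a * u1 + b * u2) * g (E1 / u1)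
          + b * u2 / (a * u1 + b * u2) * g (E2 / u2)) := by field_simp
    _ ≤ _ := h2

/-- Strict perspective-type concavity inequality when the ratios differ. -/
lemma persp_lt' {g : ℝ → ℝ} (hg : StrictConcaveOn ℝ (Ici 0) g)
    {u1 u2 E1 E2 a b : ℝ} (hu1 : 0 < u1) (hu2 : 0 < u2)
    (hE1 : 0 ≤ E1) (hE2 : 0 ≤ E2) (hne : E1 / u1 ≠ E2 / u2)
    (ha : 0 < a) (hb : 0 < b) (hab : a + b = 1) :
    a * (u1 * g (E1 / u1)) + b * (u2 * g (E2 / u2)) <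
      (a * u1 + b * u2) * g ((a * E1 + b * E2) / (a * u1 + b * u2)) := by
  have hupos : 0 < a * u1 + b * u2 := by positivity
  have hw : a * u1 / (a * u1 + b * u2) + b * u2 / (a * u1 + b * u2) = 1 := by
    field_simp
  have key := hg.2 (mem_Ici.2 (div_nonneg hE1 hu1.le)) (mem_Ici.2 (div_nonneg hE2 hu2.le))
      hne (by positivity) (by positivity) hw
  simp only [smul_eq_mul] at key
  have harg : a * u1 / (a * u1 + b * u2) * (E1 / u1) + b * u2 / (a * u1 + b * u2) * (E2 / u2)
      = (a * E1 + b * E2) / (a * u1 + b * u2) := by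
    field_simp
  rw [harg] at key
  have h2 := mul_lt_mul_of_pos_left key hupos
  calc a * (u1 * g (E1 / u1)) + b * (u2 * g (E2 / u2))
      = (a * u1 + b * u2) * (a * u1 / (a * u1 + b * u2) * g (E1 / u1)
          + b * u2 / (a * u1 + b * u2) * g (E2 / u2)) := by field_simp
    _ < _ := h2

/-- The perspective `u ↦ u * g (E / u)` is strictly increasing for `E > 0`. -/
lemma persp_mono' {g : ℝ → ℝ} (hg : StrictConcaveOn ℝ (Ici 0) g) (hg0 : g 0 = 0)
    {E s t : ℝ} (hE : 0 < E) (hs : 0 < s) (hst : s < t) :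
    s * g (E / s) < t * g (E / t) := by
  have ht : 0 < t := hs.trans hst
  have hne : E / s ≠ (0:ℝ) := ne_of_gt (div_pos hE hs)
  have hst' : 0 < 1 - s / t := by
    have : s / t < 1 := (div_lt_one ht).2 hst
    linarith
  have key := hg.2 (mem_Ici.2 (div_pos hE hs).le) (mem_Ici.2 le_rfl) hne
      (show 0 < s / t by positivity) hst' (by ring)
  simp only [smul_eq_mul, hg0, mul_zero, add_zero] at key
  have harg : s / t * (E / s) = E / t := by
    field_simp
  rw [harg] at key
  have h2 := mul_lt_mul_of_pos_left key ht
  calc s * g (E / s) = t * (s / t * g (E / s)) := by field_simp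
    _ < t * g (E / t) := h2

/-- Strict concavity of the per-interval throughput in the relay energy: with `T^D, E^D`
fixed, and `T^S = f(E^R)` implicitly defined by the data-balance equation
`T^S g(E^D/T^S) = (T^D − T^S) g(E^R/(T^D − T^S))`, the delivered data
`D(E^R) = (T^D − f(E^R)) · g(E^R/(T^D − f(E^R)))` is strictly concave in `E^R`. -/
theorem stmt10 (g : ℝ → ℝ) (TD ED : ℝ)
    (hTD : 0 < TD) (hED : 0 < ED)
    (hg_concave : StrictConcaveOn ℝ (Ici 0) g)
    (hg_mono : StrictMonoOn g (Ici 0))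
    (hg_smooth : ContDiff ℝ 2 g)
    (hg0 : g 0 = 0)
    (f : ℝ → ℝ)
    (hf : ∀ ER ∈ Ioi (0:ℝ), f ER ∈ Ioo 0 TD ∧
      f ER * g (ED / f ER) = (TD - f ER) * g (ER / (TD - f ER))) :
    StrictConcaveOn ℝ (Ioi 0)
      (fun ER => (TD - f ER) * g (ER / (TD - f ER))) := by
  constructor
  · exact convex_Ioi 0
  intro x hx y hy hxy a b ha hb hab
  simp only [smul_eq_mul]
  have hx' : (0:ℝ) < x := hx
  have hy' : (0:ℝ) < y := hy
  obtain ⟨⟨ht1a, ht1b⟩, hbal1⟩ := hf x hx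
  obtain ⟨⟨ht2a, ht2b⟩, hbal2⟩ := hf y hy
  have hE : (0:ℝ) < a * x + b * y := by positivity
  obtain ⟨⟨htEa, htEb⟩, hbalE⟩ := hf (a * x + b * y) hE
  set t1 := f x with ht1
  set t2 := f y with ht2
  set tE := f (a * x + b * y) with htEdef
  set c := a * ((TD - t1) * g (x / (TD - t1))) + b * ((TD - t2) * g (y / (TD - t2))) with hc
  show c < (TD - tE) * g ((a * x + b * y) / (TD - tE))
  -- It suffices to find t ∈ (0, TD) where both components exceed c
  suffices h : ∃ t, 0 < t ∧ t < TD ∧ c < t * g (ED / t) ∧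
      c < (TD - t) * g ((a * x + b * y) / (TD - t)) by
    obtain ⟨t, ht0, htT, hA, hB⟩ := h
    rcases le_or_gt t tE with hle | hlt
    · have hmono : t * g (ED / t) ≤ tE * g (ED / tE) := by
        rcases eq_or_lt_of_le hle with h | h
        · rw [h]
        · exact (persp_mono' hg_concave hg0 hED ht0 h).le
      calc c < t * g (ED / t) := hA
        _ ≤ tE * g (ED / tE) := hmono
        _ = (TD - tE) * g ((a * x + b * y) / (TD - tE)) := hbalE
    · have hmono : (TD - t) * g ((a * x + b * y) / (TD - t)) ≤
          (TD - tE) * g ((a * x + b * y) / (TD - tE)) :=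
        (persp_mono' hg_concave hg0 hE (by linarith) (by linarith)).le
      exact lt_of_lt_of_le hB hmono
  -- the convex combination of the switch times
  set ts := a * t1 + b * t2 with hts
  have hts0 : 0 < ts := by positivity
  have htsT : ts < TD := by nlinarith
  -- nonstrict bounds at ts
  have hA_ge : c ≤ ts * g (ED / ts) := by
    have hpersp := persp_le' hg_concave.concaveOn ht1a ht2a hED.le hED.le ha hb hab
    have hmid : a * ED + b * ED = ED := by linear_combination ED * hab
    rw [hmid] at hpersp
    calc c = a * (t1 * g (ED / t1)) + b * (t2 * g (ED / t2)) := by rw [hc, hbal1, hbal2]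
      _ ≤ ts * g (ED / ts) := hpersp
  have hB_ge : c ≤ (TD - ts) * g ((a * x + b * y) / (TD - ts)) := by
    have hpersp := persp_le' hg_concave.concaveOn (show (0:ℝ) < TD - t1 by linarith)
      (show (0:ℝ) < TD - t2 by linarith) hx'.le hy'.le ha hb hab
    have hmid : a * (TD - t1) + b * (TD - t2) = TD - ts := by
      rw [hts]; linear_combination TD * hab
    rw [hmid] at hpersp
    exact hpersp
  -- at least one of the two bounds is strict
  have hstrict : c < ts * g (ED / ts) ∨
      c < (TD - ts) * g ((a * x + b * y) / (TD - ts)) := by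
    rcases eq_or_ne t1 t2 with heq | hne
    · right
      have hrne : x / (TD - t1) ≠ y / (TD - t2) := by
        intro h
        rw [← heq] at h
        apply hxy
        field_simp [show TD - t1 ≠ 0 by linarith] at h
        exact h
      have hpersp := persp_lt' hg_concave (show (0:ℝ) < TD - t1 by linarith)
        (show (0:ℝ) < TD - t2 by linarith) hx'.le hy'.le hrne ha hb hab
      have hmid : a * (TD - t1) + b * (TD - t2) = TD - ts := by
        rw [hts]; linear_combination TD * hab
      rw [hmid] at hpersp
      exact hpersp
    · left
      have hrne : ED / t1 ≠ ED / t2 := by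
        intro h
        apply hne
        rw [div_eq_div_iff ht1a.ne' ht2a.ne'] at h
        exact (mul_left_cancel₀ hED.ne' h).symm
      have hpersp := persp_lt' hg_concave ht1a ht2a hED.le hED.le hrne ha hb hab
      have hmid : a * ED + b * ED = ED := by linear_combination ED * hab
      rw [hmid] at hpersp
      calc c = a * (t1 * g (ED / t1)) + b * (t2 * g (ED / t2)) := by rw [hc, hbal1, hbal2]
        _ < ts * g (ED / ts) := hpersp
  rcases hstrict with hσ | hσ
  · -- perturb downwards: the A-component stays > c by continuity, B strictly improves
    have hcont : ContinuousAt (fun t : ℝ => t * g (ED / t)) ts :=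
      continuousAt_id.mul ((hg_smooth.continuous.continuousAt).comp
        (continuousAt_const.div continuousAt_id hts0.ne'))
    have h1 : ∀ᶠ t in 𝓝 ts, c < t * g (ED / t) :=
      Filter.Tendsto.eventually hcont (eventually_gt_nhds hσ)
    have h2 : ∀ᶠ t in 𝓝 ts, t ∈ Ioo (0:ℝ) TD :=
      eventually_mem_set.2 (Ioo_mem_nhds hts0 htsT)
    have h3 : ∀ᶠ t in 𝓝[<] ts, (c < t * g (ED / t) ∧ t ∈ Ioo (0:ℝ) TD) ∧ t ∈ Iio ts :=
      ((h1.and h2).filter_mono nhdsWithin_le_nhds).and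
        (eventually_mem_set.2 self_mem_nhdsWithin)
    obtain ⟨t, ⟨hAt, ht0, htT⟩, htlt⟩ := h3.exists
    refine ⟨t, ht0, htT, hAt, ?_⟩
    have hbig : (TD - ts) * g ((a * x + b * y) / (TD - ts)) <
        (TD - t) * g ((a * x + b * y) / (TD - t)) :=
      persp_mono' hg_concave hg0 hE (by linarith) (by simpa using htlt)
    linarith
  · -- perturb upwards
    have hcont : ContinuousAt (fun t : ℝ => (TD - t) * g ((a * x + b * y) / (TD - t))) ts :=
      ((continuous_const.sub continuous_id).continuousAt).mul
        ((hg_smooth.continuous.continuousAt).comp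
          (continuousAt_const.div ((continuous_const.sub continuous_id).continuousAt)
            (show TD - ts ≠ 0 by intro h; linarith [h])))
    have h1 : ∀ᶠ t in 𝓝 ts, c < (TD - t) * g ((a * x + b * y) / (TD - t)) :=
      Filter.Tendsto.eventually hcont (eventually_gt_nhds hσ)
    have h2 : ∀ᶠ t in 𝓝 ts, t ∈ Ioo (0:ℝ) TD :=
      eventually_mem_set.2 (Ioo_mem_nhds hts0 htsT)
    have h3 : ∀ᶠ t in 𝓝[>] ts, (c < (TD - t) * g ((a * x + b * y) / (TD - t)) ∧
        t ∈ Ioo (0:ℝ) TD) ∧ t ∈ Ioi ts :=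
      ((h1.and h2).filter_mono nhdsWithin_le_nhds).and
        (eventually_mem_set.2 self_mem_nhdsWithin)
    obtain ⟨t, ⟨hBt, ht0, htT⟩, htgt⟩ := h3.exists
    refine ⟨t, ht0, htT, ?_, hBt⟩
    have hbig : ts * g (ED / ts) < t * g (ED / t) :=
      persp_mono' hg_concave hg0 hED hts0 (by simpa using htgt)
    linarith
end
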